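/- Let C be a small category, F, G : Cᵒᵖ ⥤ Type presheaves on C, and φ : F ⟶ G a morphism of presheaves such that the induced functor ∫φ : ∫F ⥤ ∫G has a right adjoint R, with counit ε. Let (d, y) be an object of ∫G, write R(d, y) = (c, x) with x ∈ F(c), and let π : c ⟶ d be the morphism of C underlying the counit component ε_{(d,y)} : (c, φ_c(x)) ⟶ (d, y) in ∫G (so that G(π)(y) = φ_c(x)). Then the square of presheaves whose top edge is the Yoneda-classifying map x̃ : y(c) ⟶ F of x, whose left edge is y(π) : y(c) ⟶ y(d), whose right edge is φ : F ⟶ G, and whose bottom edge is the Yoneda-classifying map ỹ : y(d) ⟶ G of y, is a pullback square in the category of presheaves on C. -/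

import Mathlib

open CategoryTheory CategoryTheory.Limits Opposite

universe u

/-- The category of elements of a presheaf `F : Cᵒᵖ ⥤ Type u`, with objects pairs
`(c, x ∈ F(c))` and morphisms `(c, x) ⟶ (d, y)` the morphisms `f : c ⟶ d` of `C` with
`F(f)(y) = x`. -/
structure PElt {C : Type u} [SmallCategory C] (F : Cᵒᵖ ⥤ Type u) : Type u where
  base : C
  elt : F.obj (op base)

namespace PElt

variable {C : Type u} [SmallCategory C]

instance (F : Cᵒᵖ ⥤ Type u) : Category (PElt F) where
  Hom x y := { f : x.base ⟶ y.base // F.map f.op y.elt = x.elt }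
  id x := ⟨𝟙 x.base, by rw [op_id, FunctorToTypes.map_id_apply]⟩
  comp {x y z} f g := ⟨f.1 ≫ g.1, by rw [op_comp, FunctorToTypes.map_comp_apply, g.2, f.2]⟩
  id_comp f := Subtype.ext (Category.id_comp f.1)
  comp_id f := Subtype.ext (Category.comp_id f.1)
  assoc f g h := Subtype.ext (Category.assoc f.1 g.1 h.1)

/-- The functor `∫φ : ∫F ⥤ ∫G` on categories of elements induced by a morphism of
presheaves `φ : F ⟶ G`, sending `(c, x)` to `(c, φ_c(x))`. -/
def map {F G : Cᵒᵖ ⥤ Type u} (φ : F ⟶ G) : PElt F ⥤ PElt G where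
  obj x := ⟨x.base, φ.app _ x.elt⟩
  map {x y} f := ⟨f.1, by rw [← FunctorToTypes.naturality, f.2]⟩
  map_id _ := rfl
  map_comp _ _ := rfl

/-- The projection `π : ∫F ⥤ C` from the category of elements of a presheaf. -/
def proj (F : Cᵒᵖ ⥤ Type u) : PElt F ⥤ C where
  obj x := x.base
  map f := f.1
  map_id _ := rfl
  map_comp _ _ := rfl

theorem map_comp' {F G H : Cᵒᵖ ⥤ Type u} (φ : F ⟶ G) (ψ : G ⟶ H) :
    PElt.map (φ ≫ ψ) = PElt.map φ ⋙ PElt.map ψ := rfl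

end PElt

/-- For a representable morphism of presheaves `φ : F ⟶ G` with right adjoint `R` of
`∫φ` and counit `ε`, and any object `(d, y)` of `∫G` with `R(d, y) = (c, x)` and
`π : c ⟶ d` the morphism of `C` underlying `ε_{(d,y)}`, the square with top the
classifying map `x̃ : y(c) ⟶ F`, left `y(π)`, right `φ`, and bottom `ỹ : y(d) ⟶ G`,
is a pullback of presheaves. -/
theorem counit_classifying_square_isPullback {C : Type u} [SmallCategory C]
    {F G : Cᵒᵖ ⥤ Type u} (φ : F ⟶ G) (R : PElt G ⥤ PElt F)
    (adj : PElt.map φ ⊣ R) (dy : PElt G) :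
    IsPullback (yonedaEquiv.symm (R.obj dy).elt)
      (yoneda.map (adj.counit.app dy).1)
      φ
      (yonedaEquiv.symm dy.elt) := by
  set π := (adj.counit.app dy).1 with hπ
  have hcompat : G.map π.op dy.elt = φ.app _ (R.obj dy).elt := (adj.counit.app dy).2
  have w : CommSq (yonedaEquiv.symm (R.obj dy).elt) (yoneda.map π) φ
      (yonedaEquiv.symm dy.elt) := by
    constructor
    ext k (f : k.unop ⟶ (R.obj dy).base)
    change φ.app k (F.map f.op (R.obj dy).elt) = G.map ((yoneda.map π).app k f).op dy.elt
    rw [FunctorToTypes.naturality]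
    change _ = G.map (f ≫ π).op dy.elt
    exact ((FunctorToTypes.map_comp_apply G π.op f.op dy.elt).trans (congrArg (G.map f.op) hcompat)).symm
  refine IsPullback.of_isLimit' w ?_
  apply evaluationJointlyReflectsLimits
  intro k
  refine (isLimitMapConePullbackConeEquiv ((evaluation Cᵒᵖ (Type u)).obj k) w.w).symm ?_
  refine (PullbackCone.isLimitEquivBijective _).symm ?_
  constructor
  · -- injectivity
    intro g₁ g₂ h
    have h1 : F.map g₁.op (R.obj dy).elt = F.map g₂.op (R.obj dy).elt :=
      congrArg (fun p => p.1.1) h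
    have h2 : g₁ ≫ π = g₂ ≫ π := congrArg (fun p => p.1.2) h
    set z := F.map g₁.op (R.obj dy).elt with hz
    let X : PElt F := ⟨k.unop, z⟩
    let gh1 : X ⟶ R.obj dy := ⟨g₁, rfl⟩
    let gh2 : X ⟶ R.obj dy := ⟨g₂, h1.symm⟩
    have : (adj.homEquiv X dy).symm gh1 = (adj.homEquiv X dy).symm gh2 := by
      apply Subtype.ext
      have e1 : ((adj.homEquiv X dy).symm gh1).1 = g₁ ≫ π := by
        rw [adj.homEquiv_counit]; rfl
      have e2 : ((adj.homEquiv X dy).symm gh2).1 = g₂ ≫ π := by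
        rw [adj.homEquiv_counit]; rfl
      rw [e1, e2, h2]
    have := (adj.homEquiv X dy).symm.injective this
    exact congrArg Subtype.val this
  · -- surjectivity
    rintro ⟨⟨z, f⟩, (hzf : φ.app k z = G.map f.op dy.elt)⟩
    let X : PElt F := ⟨k.unop, z⟩
    let u : (PElt.map φ).obj X ⟶ dy := ⟨f, hzf.symm⟩
    let g : X ⟶ R.obj dy := adj.homEquiv X dy u
    refine ⟨g.1, ?_⟩
    have hu : (adj.homEquiv X dy).symm g = u := (adj.homEquiv X dy).symm_apply_apply u
    have hcomp : g.1 ≫ π = f := by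
      have : ((adj.homEquiv X dy).symm g).1 = g.1 ≫ π := by
        rw [adj.homEquiv_counit]; rfl
      rw [hu] at this; exact this.symm
    apply Subtype.ext
    apply Prod.ext
    · exact g.2
    · exact hcomp
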